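/- The (m+4)-dimensional algebra L with basis {e,f,h,x_0,...,x_m} (m ≥ 2) and nonzero products [x_k,e] = -k(m+1-k)x_{k-1} (1 ≤ k ≤ m), [x_k,f] = x_{k+1} (0 ≤ k ≤ m-1), [x_k,h] = (m-2k)x_k (0 ≤ k ≤ m), [e,h] = 2e, [h,e] = -2e, [h,f] = 2f, [f,h] = -2f, [e,f] = h, [f,e] = -h, is a Leibniz algebra, i.e., it satisfies [x,[y,z]] = [[x,y],z] - [[x,z],y]. -/

import Mathlib

open Finset

/-- Basis index type: `Sum.inl 0 = e`, `Sum.inl 1 = f`, `Sum.inl 2 = h`,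
`Sum.inr k = x_k`. -/
abbrev BasisIdx (m : ℕ) : Type := Fin 3 ⊕ Fin (m + 1)

/-- The underlying vector space of the `(m+4)`-dimensional algebra. -/
def Lm (m : ℕ) : Type := BasisIdx m → ℂ

noncomputable instance (m : ℕ) : AddCommGroup (Lm m) := Pi.addCommGroup
noncomputable instance (m : ℕ) : Module ℂ (Lm m) := Pi.module _ _ _
instance (m : ℕ) : FiniteDimensional ℂ (Lm m) := Module.Finite.pi (ι := BasisIdx m)

/-- The basis vectors. -/
noncomputable def bas (m : ℕ) (i : BasisIdx m) : Lm m := Pi.single i 1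

/-- Structure constants of the simple Leibniz algebra with associated Lie algebra
`sl₂`:  `[x_k,e] = -k(m+1-k)x_{k-1}`, `[x_k,f] = x_{k+1}`, `[x_k,h] = (m-2k)x_k`,
`[e,h] = 2e = -[h,e]`, `[h,f] = 2f = -[f,h]`, `[e,f] = h = -[f,e]`,
all other products of basis vectors being zero. -/
noncomputable def sc (m : ℕ) : BasisIdx m → BasisIdx m → Lm m
  | Sum.inr k, Sum.inl ⟨0, _⟩ =>
      (-((k : ℂ) * ((m : ℂ) + 1 - (k : ℂ)))) •
        bas m (Sum.inr ⟨(k : ℕ) - 1, Nat.lt_of_le_of_lt (Nat.sub_le _ _) k.isLt⟩)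
  | Sum.inr k, Sum.inl ⟨1, _⟩ =>
      if h : (k : ℕ) < m then bas m (Sum.inr ⟨(k : ℕ) + 1, by omega⟩) else 0
  | Sum.inr k, Sum.inl ⟨2, _⟩ => ((m : ℂ) - 2 * (k : ℂ)) • bas m (Sum.inr k)
  | Sum.inl ⟨0, _⟩, Sum.inl ⟨2, _⟩ => (2 : ℂ) • bas m (Sum.inl 0)
  | Sum.inl ⟨2, _⟩, Sum.inl ⟨0, _⟩ => (-2 : ℂ) • bas m (Sum.inl 0)
  | Sum.inl ⟨2, _⟩, Sum.inl ⟨1, _⟩ => (2 : ℂ) • bas m (Sum.inl 1)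
  | Sum.inl ⟨1, _⟩, Sum.inl ⟨2, _⟩ => (-2 : ℂ) • bas m (Sum.inl 1)
  | Sum.inl ⟨0, _⟩, Sum.inl ⟨1, _⟩ => bas m (Sum.inl 2)
  | Sum.inl ⟨1, _⟩, Sum.inl ⟨0, _⟩ => -bas m (Sum.inl 2)
  | _, _ => 0

/-- The bilinear bracket of the algebra, extended from the structure constants. -/
noncomputable def br (m : ℕ) (x y : Lm m) : Lm m :=
  ∑ i : BasisIdx m, ∑ j : BasisIdx m, (x i * y j) • sc m i j

section
variable (m : ℕ)

lemma Lm.add_apply (u v : Lm m) (i : BasisIdx m) : (u + v) i = u i + v i := rfl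
lemma Lm.smul_apply (c : ℂ) (v : Lm m) (i : BasisIdx m) : (c • v) i = c * v i := rfl
lemma Lm.zero_apply (i : BasisIdx m) : (0 : Lm m) i = 0 := rfl
lemma Lm.sum_apply {α : Type*} (s : Finset α) (f : α → Lm m) (i : BasisIdx m) :
    (∑ a ∈ s, f a) i = ∑ a ∈ s, f a i := by
  classical
  induction s using Finset.induction with
  | empty => rfl
  | insert _ _ h ih => rw [Finset.sum_insert h, Finset.sum_insert h, Lm.add_apply, ih]

lemma br_zero_right (x : Lm m) : br m x 0 = 0 := by
  unfold br; simp only [Lm.zero_apply, mul_zero, zero_smul, Finset.sum_const_zero]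

lemma br_zero_left (x : Lm m) : br m 0 x = 0 := by
  unfold br; simp only [Lm.zero_apply, zero_mul, zero_smul, Finset.sum_const_zero]

lemma br_add_right (x u v : Lm m) : br m x (u + v) = br m x u + br m x v := by
  unfold br
  simp only [Lm.add_apply, mul_add, add_smul, Finset.sum_add_distrib]

lemma br_add_left (x u v : Lm m) : br m (u + v) x = br m u x + br m v x := by
  unfold br
  simp only [Lm.add_apply, add_mul, add_smul, Finset.sum_add_distrib]

lemma br_smul_right (c : ℂ) (x v : Lm m) : br m x (c • v) = c • br m x v := by
  unfold br
  simp only [Lm.smul_apply, Finset.smul_sum, smul_smul]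
  congr 1; funext i; congr 1; funext j; ring_nf

lemma br_smul_left (c : ℂ) (x v : Lm m) : br m (c • v) x = c • br m v x := by
  unfold br
  simp only [Lm.smul_apply, Finset.smul_sum, smul_smul]
  congr 1; funext i; congr 1; funext j; ring_nf

lemma br_sum_right {α : Type*} (x : Lm m) (s : Finset α) (f : α → Lm m) :
    br m x (∑ a ∈ s, f a) = ∑ a ∈ s, br m x (f a) := by
  classical
  induction s using Finset.induction with
  | empty => simpa using br_zero_right m x
  | insert _ _ h ih => rw [Finset.sum_insert h, Finset.sum_insert h, br_add_right, ih]

lemma br_sum_left {α : Type*} (x : Lm m) (s : Finset α) (f : α → Lm m) :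
    br m (∑ a ∈ s, f a) x = ∑ a ∈ s, br m (f a) x := by
  classical
  induction s using Finset.induction with
  | empty => simpa using br_zero_left m x
  | insert _ _ h ih => rw [Finset.sum_insert h, Finset.sum_insert h, br_add_left, ih]

lemma br_bas_bas (a b : BasisIdx m) : br m (bas m a) (bas m b) = sc m a b := by
  unfold br bas
  simp [Pi.single_apply, ite_mul, mul_ite]

lemma expand_basis (v : Lm m) : v = ∑ i, v i • bas m i := by
  funext c
  rw [Lm.sum_apply]
  simp only [Lm.smul_apply]; simp [bas, Lm.smul_apply, Pi.single_apply, mul_ite, eq_comm, -Fintype.sum_sum_type]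
  rw [Finset.sum_eq_single c (by intro b _ hb; simp [Ne.symm hb]) (by simp)]; simp

end
section
variable (m : ℕ)

lemma sc_x_right (l : BasisIdx m) (q : Fin (m + 1)) : sc m l (Sum.inr q) = 0 := by
  rcases l with ⟨v, hv⟩ | p
  · interval_cases v <;> rfl
  · rfl

lemma br_single_right (v : Lm m) (b : BasisIdx m) :
    br m v (bas m b) = ∑ l, v l • sc m l b := by
  unfold br bas
  rw [Finset.sum_congr rfl (fun i _ => Finset.sum_eq_single b
    (fun j _ hj => by simp [Pi.single_apply, hj]) (by simp))]
  simp [Pi.single_apply]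

lemma br_single_left (v : Lm m) (a : BasisIdx m) :
    br m (bas m a) v = ∑ l, v l • sc m a l := by
  unfold br bas
  rw [Finset.sum_eq_single a (fun i _ hi => by simp [Pi.single_apply, hi]) (by simp)]
  simp [Pi.single_apply]

lemma br_x_right (v : Lm m) (q : Fin (m + 1)) : br m v (bas m (Sum.inr q)) = 0 := by
  rw [br_single_right]
  simp [sc_x_right]

end
section
variable (m : ℕ)

lemma br_neg_right (x v : Lm m) : br m x (-v) = -br m x v := by
  have : (-v) = (-1 : ℂ) • v := by funext i; simp [Lm.smul_apply]; rfl
  rw [this, br_smul_right]; simp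

lemma br_neg_left (x v : Lm m) : br m (-v) x = -br m v x := by
  have : (-v) = (-1 : ℂ) • v := by funext i; simp [Lm.smul_apply]; rfl
  rw [this, br_smul_left]; simp

lemma sc_ee : sc m (Sum.inl 0) (Sum.inl 0) = 0 := rfl
lemma sc_ef : sc m (Sum.inl 0) (Sum.inl 1) = bas m (Sum.inl 2) := rfl
lemma sc_eh : sc m (Sum.inl 0) (Sum.inl 2) = (2 : ℂ) • bas m (Sum.inl 0) := rfl
lemma sc_fe : sc m (Sum.inl 1) (Sum.inl 0) = -bas m (Sum.inl 2) := rfl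
lemma sc_ff : sc m (Sum.inl 1) (Sum.inl 1) = 0 := rfl
lemma sc_fh : sc m (Sum.inl 1) (Sum.inl 2) = (-2 : ℂ) • bas m (Sum.inl 1) := rfl
lemma sc_he : sc m (Sum.inl 2) (Sum.inl 0) = (-2 : ℂ) • bas m (Sum.inl 0) := rfl
lemma sc_hf : sc m (Sum.inl 2) (Sum.inl 1) = (2 : ℂ) • bas m (Sum.inl 1) := rfl
lemma sc_hh : sc m (Sum.inl 2) (Sum.inl 2) = 0 := rfl
lemma sc_xe (k : Fin (m + 1)) : sc m (Sum.inr k) (Sum.inl 0) =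
    (-((k : ℂ) * ((m : ℂ) + 1 - (k : ℂ)))) •
      bas m (Sum.inr ⟨(k : ℕ) - 1, Nat.lt_of_le_of_lt (Nat.sub_le _ _) k.isLt⟩) := rfl
lemma sc_xf (k : Fin (m + 1)) : sc m (Sum.inr k) (Sum.inl 1) =
    if h : (k : ℕ) < m then bas m (Sum.inr ⟨(k : ℕ) + 1, by omega⟩) else 0 := rfl
lemma sc_xh (k : Fin (m + 1)) : sc m (Sum.inr k) (Sum.inl 2) =
    ((m : ℂ) - 2 * (k : ℂ)) • bas m (Sum.inr k) := rfl

lemma keyL (vi vj vk : ℕ) (hi : vi < 3) (hj : vj < 3) (hk : vk < 3) :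
    br m (bas m (Sum.inl ⟨vi, hi⟩)) (sc m (Sum.inl ⟨vj, hj⟩) (Sum.inl ⟨vk, hk⟩)) =
      br m (sc m (Sum.inl ⟨vi, hi⟩) (Sum.inl ⟨vj, hj⟩)) (bas m (Sum.inl ⟨vk, hk⟩)) -
        br m (sc m (Sum.inl ⟨vi, hi⟩) (Sum.inl ⟨vk, hk⟩)) (bas m (Sum.inl ⟨vj, hj⟩)) := by
  interval_cases vi <;> interval_cases vj <;> interval_cases vk <;>
    simp only [sc] <;> simp [sc_ee, sc_ef, sc_eh, sc_fe, sc_ff, sc_fh, sc_he, sc_hf, sc_hh, sc_xe, sc_xf, sc_xh, br_zero_left, br_zero_right, br_smul_left, br_smul_right,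
      br_neg_left, br_neg_right, br_bas_bas]

lemma br_bas_scx (a : BasisIdx m) (q : Fin (m + 1)) (c : BasisIdx m) :
    br m (bas m a) (sc m (Sum.inr q) c) = 0 := by
  rcases c with ⟨v, hv⟩ | r
  · interval_cases v
    · simp only [sc]; simp [sc_ee, sc_ef, sc_eh, sc_fe, sc_ff, sc_fh, sc_he, sc_hf, sc_hh, sc_xe, sc_xf, sc_xh, br_neg_right, br_smul_right, br_bas_bas, sc_x_right]
    · simp only [sc]
      split_ifs <;> simp [br_bas_bas, sc_x_right, br_zero_right]
    · simp only [sc]; simp [sc_ee, sc_ef, sc_eh, sc_fe, sc_ff, sc_fh, sc_he, sc_hf, sc_hh, sc_xe, sc_xf, sc_xh, br_smul_right, br_bas_bas, sc_x_right]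
  · simp [sc_x_right, br_zero_right]

end
section
variable (m : ℕ)

lemma keyX (hm : 2 ≤ m) (p : ℕ) (hp : p < m + 1) (vj vk : ℕ) (hj : vj < 3) (hk : vk < 3) :
    br m (bas m (Sum.inr ⟨p, hp⟩)) (sc m (Sum.inl ⟨vj, hj⟩) (Sum.inl ⟨vk, hk⟩)) =
      br m (sc m (Sum.inr ⟨p, hp⟩) (Sum.inl ⟨vj, hj⟩)) (bas m (Sum.inl ⟨vk, hk⟩)) -
        br m (sc m (Sum.inr ⟨p, hp⟩) (Sum.inl ⟨vk, hk⟩)) (bas m (Sum.inl ⟨vj, hj⟩)) := by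
  have hps : p - 1 < m := by omega
  interval_cases vj <;> interval_cases vk <;>
    simp only [sc] <;> simp [sc_ee, sc_ef, sc_eh, sc_fe, sc_ff, sc_fh, sc_he, sc_hf, sc_hh, sc_xe, sc_xf, sc_xh, br_zero_left, br_zero_right, br_smul_left, br_smul_right,
      br_neg_left, br_neg_right, br_bas_bas, hps] <;>
    (by_cases hpm : p < m <;>
      (try simp [sc_ee, sc_ef, sc_eh, sc_fe, sc_ff, sc_fh, sc_he, sc_hf, sc_hh, sc_xe, sc_xf, sc_xh, br_zero_left, br_zero_right, br_smul_left, br_smul_right,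
        br_neg_left, br_neg_right, br_bas_bas, hps, hpm]) <;>
      (by_cases h0 : p = 0
       · subst h0
         first
           | (exfalso; omega)
           | (norm_num; try (match_scalars <;> push_cast <;> ring))
       · have h1 : 0 < p := by omega
         have e1 : p - 1 + 1 = p := by omega
         have e2 : p + 1 - 1 = p := by omega
         try simp only [e1, e2, Nat.cast_sub h1, Nat.cast_add, Nat.cast_one]
         match_scalars <;> push_cast <;>
           first
             | (rw [congrArg (Nat.cast (R := ℂ)) (show p = m by omega)]; ring)
             | ring))

end
section
variable (m : ℕ)

lemma key (hm : 2 ≤ m) (i j k : BasisIdx m) :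
    br m (bas m i) (sc m j k) =
      br m (sc m i j) (bas m k) - br m (sc m i k) (bas m j) := by
  rcases k with ⟨vk, hk⟩ | q
  · rcases j with ⟨vj, hj⟩ | q
    · rcases i with ⟨vi, hi⟩ | ⟨p, hp⟩
      · exact keyL m vi vj vk hi hj hk
      · exact keyX m hm p hp vj vk hj hk
    · rw [br_bas_scx, sc_x_right, br_zero_left, br_x_right]
      simp
  · rw [sc_x_right, br_zero_right, br_x_right, sc_x_right, br_zero_left]
    simp

lemma key2 (hm : 2 ≤ m) (i j : BasisIdx m) (z : Lm m) :
    br m (bas m i) (br m (bas m j) z) =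
      br m (sc m i j) z - br m (br m (bas m i) z) (bas m j) := by
  rw [expand_basis m z]
  simp only [br_sum_right, br_smul_right, br_bas_bas, br_sum_left, br_smul_left]
  rw [← Finset.sum_sub_distrib]
  refine Finset.sum_congr rfl fun k _ => ?_
  rw [← smul_sub, key m hm i j k]

lemma key3 (hm : 2 ≤ m) (i : BasisIdx m) (y z : Lm m) :
    br m (bas m i) (br m y z) =
      br m (br m (bas m i) y) z - br m (br m (bas m i) z) y := by
  rw [expand_basis m y]
  simp only [br_sum_right, br_smul_right, br_bas_bas, br_sum_left, br_smul_left]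
  rw [← Finset.sum_sub_distrib]
  refine Finset.sum_congr rfl fun j _ => ?_
  rw [← smul_sub, key2 m hm i j z]

end


/-- The `(m+4)`-dimensional algebra with the multiplication table of Theorem 2.3 is a
(right) Leibniz algebra: `[x,[y,z]] = [[x,y],z] - [[x,z],y]`. -/
theorem stmt5 (m : ℕ) (hm : 2 ≤ m) :
    ∀ x y z : Lm m, br m x (br m y z) = br m (br m x y) z - br m (br m x z) y := by
  intro x y z
  rw [expand_basis m x]
  simp only [br_sum_left, br_smul_left]
  rw [← Finset.sum_sub_distrib]
  refine Finset.sum_congr rfl fun i _ => ?_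
  rw [← smul_sub, key3 m hm i y z]
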